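/- A weak endomorphism α of P⃗ₙ is a regular element of the monoid wEnd P⃗ₙ (under composition) if and only if for every x in the image of α with |α⁻¹(x)| > 1, x is the minimum or the maximum of the image of α. -/

import Mathlib

def wEnd (n : ℕ) (α : Fin n → Fin n) : Prop :=
  ∀ u v : Fin n, (v : ℕ) = (u : ℕ) + 1 → α u ≠ α v → (α v : ℕ) = (α u : ℕ) + 1

namespace StmtSevenAux

variable {n : ℕ} {α : Fin n → Fin n}

lemma step (hα : wEnd n α) {i j : Fin n} (h : (j : ℕ) = (i : ℕ) + 1) :
    (α j : ℕ) = α i ∨ (α j : ℕ) = (α i : ℕ) + 1 := by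
  by_cases he : α i = α j
  · exact Or.inl (by rw [he])
  · exact Or.inr (hα i j h he)

lemma mono_lip (hα : wEnd n α) :
    ∀ k (i j : Fin n), (j : ℕ) = (i : ℕ) + k →
      (α i : ℕ) ≤ α j ∧ (α j : ℕ) ≤ (α i : ℕ) + k := by
  intro k
  induction k with
  | zero =>
    intro i j h
    have : i = j := Fin.ext (by omega)
    subst this; simp
  | succ k ih =>
    intro i j h
    have hik : (i : ℕ) + k < n := by have := j.isLt; omega
    obtain ⟨h1, h2⟩ := ih i ⟨(i : ℕ) + k, hik⟩ rfl
    have hs := step hα (i := ⟨(i : ℕ) + k, hik⟩) (j := j)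
      (by show (j : ℕ) = (i : ℕ) + k + 1; omega)
    rcases hs with hs | hs <;> constructor <;> omega

lemma mono (hα : wEnd n α) {i j : Fin n} (h : (i : ℕ) ≤ j) : (α i : ℕ) ≤ α j :=
  (mono_lip hα ((j : ℕ) - i) i j (by omega)).1

lemma ivt (hα : wEnd n α) :
    ∀ k (i j : Fin n), (j : ℕ) = (i : ℕ) + k → ∀ c : ℕ,
      (α i : ℕ) ≤ c → c ≤ (α j : ℕ) → ∃ y : Fin n, (α y : ℕ) = c := by
  intro k
  induction k with
  | zero =>
    intro i j h c h1 h2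
    have : i = j := Fin.ext (by omega)
    subst this
    exact ⟨i, by omega⟩
  | succ k ih =>
    intro i j h c h1 h2
    have hik : (i : ℕ) + k < n := by have := j.isLt; omega
    have hs := step hα (i := ⟨(i : ℕ) + k, hik⟩) (j := j)
      (by show (j : ℕ) = (i : ℕ) + k + 1; omega)
    by_cases hc : c ≤ (α ⟨(i : ℕ) + k, hik⟩ : ℕ)
    · exact ih i ⟨(i : ℕ) + k, hik⟩ rfl c h1 hc
    · exact ⟨j, by omega⟩

end StmtSevenAux

open StmtSevenAux in
/-- Regularity of `α` in the monoid `wEnd P⃗ₙ` (left-to-right composition: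
`α β α = α` means `∀ x, α (β (α x)) = α x`), iff every image point with more
than one preimage is the minimum or maximum of the image. -/
theorem stmt_7 (n : ℕ) (hn : 1 ≤ n) (α : Fin n → Fin n) (hα : wEnd n α) :
    (∃ β : Fin n → Fin n, wEnd n β ∧ ∀ x, α (β (α x)) = α x) ↔
      ∀ x ∈ Set.range α, 1 < Set.ncard {y | α y = x} →
        IsLeast (Set.range α) x ∨ IsGreatest (Set.range α) x := by
  have h0 : 0 < n := hn
  have hl : n - 1 < n := by omega
  set a : Fin n := α ⟨0, h0⟩ with ha
  set b : Fin n := α ⟨n - 1, hl⟩ with hb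
  have hbound : ∀ y : Fin n, (a : ℕ) ≤ α y ∧ (α y : ℕ) ≤ b := by
    intro y
    exact ⟨mono hα (by simp), mono hα (by simp; omega)⟩
  have hsurj : ∀ c : ℕ, (a : ℕ) ≤ c → c ≤ (b : ℕ) → ∃ y : Fin n, (α y : ℕ) = c := by
    intro c h1 h2
    exact ivt hα (n - 1) ⟨0, h0⟩ ⟨n - 1, hl⟩ (by simp) c h1 h2
  have hmemrange : a ∈ Set.range α := ⟨_, rfl⟩
  have hmemrangeb : b ∈ Set.range α := ⟨_, rfl⟩
  have hleast : ∀ x : Fin n, IsLeast (Set.range α) x → x = a := by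
    intro x ⟨⟨y, hy⟩, hlb⟩
    have h1 : x ≤ a := hlb hmemrange
    have h2 : (a : ℕ) ≤ x := by rw [← hy]; exact (hbound y).1
    exact Fin.ext (by rw [Fin.le_def] at h1; omega)
  have hgreat : ∀ x : Fin n, IsGreatest (Set.range α) x → x = b := by
    intro x ⟨⟨y, hy⟩, hub⟩
    have h1 : b ≤ x := hub hmemrangeb
    have h2 : (x : ℕ) ≤ b := by rw [← hy]; exact (hbound y).2
    exact Fin.ext (by rw [Fin.le_def] at h1; omega)
  constructor
  · rintro ⟨β, hβ, hfix⟩ x hx hcard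
    by_contra hcon
    push_neg at hcon
    obtain ⟨hnl, hng⟩ := hcon
    -- x is strictly between a and b
    have hax : (a : ℕ) < x := by
      by_contra h'
      push_neg at h'
      exact hnl ⟨hx, fun y ⟨z, hz⟩ => by
        rw [Fin.le_def]; rw [← hz]; have := (hbound z).1; omega⟩
    have hxb : (x : ℕ) < b := by
      by_contra h'
      push_neg at h'
      exact hng ⟨hx, fun y ⟨z, hz⟩ => by
        rw [Fin.le_def]; rw [← hz]; have := (hbound z).2; omega⟩
    obtain ⟨z, hz⟩ := hx
    obtain ⟨u, hu⟩ := hsurj ((x : ℕ) - 1) (by omega) (by omega)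
    obtain ⟨w, hw⟩ := hsurj ((x : ℕ) + 1) (by omega) (by omega)
    -- β steps exactly by one at x
    have hzu : (α z : ℕ) = (α u : ℕ) + 1 := by rw [hz]; omega
    have hwz : (α w : ℕ) = (α z : ℕ) + 1 := by rw [hz]; omega
    have hne1 : β (α u) ≠ β (α z) := by
      intro he
      have h1 := hfix u
      rw [he, hfix z] at h1
      have h2 := congrArg Fin.val h1
      omega
    have hne2 : β (α z) ≠ β (α w) := by
      intro he
      have h1 := hfix z
      rw [he, hfix w] at h1
      have h2 := congrArg Fin.val h1
      omega
    have hstep1 : (β (α z) : ℕ) = (β (α u) : ℕ) + 1 := hβ (α u) (α z) hzu hne1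
    have hstep2 : (β (α w) : ℕ) = (β (α z) : ℕ) + 1 := hβ (α z) (α w) hwz hne2
    -- every preimage of x equals β (α z)
    have hsub : {y | α y = x} ⊆ {β (α z)} := by
      intro y hy
      simp only [Set.mem_setOf_eq] at hy
      simp only [Set.mem_singleton_iff]
      rcases lt_trichotomy (y : ℕ) ((β (α z) : ℕ)) with h' | h' | h'
      · exfalso
        have hym : (y : ℕ) ≤ (β (α u) : ℕ) := by omega
        have := mono hα hym
        rw [hfix u] at this
        rw [hy, hu] at this
        omega
      · exact Fin.ext h'
      · exfalso
        have hym : (β (α w) : ℕ) ≤ (y : ℕ) := by omega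
        have := mono hα hym
        rw [hfix w] at this
        rw [hy, hw] at this
        omega
    have : Set.ncard {y | α y = x} ≤ 1 := by
      have := Set.ncard_le_ncard hsub (Set.finite_singleton _)
      simpa using this
    omega
  · intro h
    by_cases hab : (a : ℕ) = b
    · -- constant case
      have hconst : ∀ y, α y = a := by
        intro y
        have := hbound y
        exact Fin.ext (by omega)
      refine ⟨fun _ => ⟨0, h0⟩, ?_, ?_⟩
      · intro u v _ hne; exact absurd rfl hne
      · intro x; rw [hconst, hconst]
    · have hab' : (a : ℕ) < b := by
        have := (hbound ⟨n - 1, hl⟩).1; omega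
      -- the selector sets
      set S : ℕ → Finset (Fin n) :=
        fun c => Finset.univ.filter (fun y => (α y : ℕ) ≤ max c (a : ℕ)) with hS
      have hSne : ∀ c, (S c).Nonempty := by
        intro c
        exact ⟨⟨0, h0⟩, by simp [hS, ← ha, le_max_right]⟩
      set T : Finset (Fin n) := Finset.univ.filter (fun y => α y = b) with hT
      have hTne : T.Nonempty := ⟨⟨n - 1, hl⟩, by simp [hT, hb]⟩
      set L : Fin n := T.min' hTne with hL
      have hLb : α L = b := by
        have := T.min'_mem hTne
        simp [hT] at this
        exact this
      have hLmin : ∀ y : Fin n, α y = b → L ≤ y := by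
        intro y hy
        exact T.min'_le y (by simp [hT, hy])
      -- key properties of the max-selector
      have hmaxmem : ∀ c : ℕ, (α ((S c).max' (hSne c)) : ℕ) ≤ max c (a : ℕ) := by
        intro c
        have := (S c).max'_mem (hSne c)
        simp only [hS, Finset.mem_filter, Finset.mem_univ, true_and] at this
        exact this
      have hgt : ∀ c : ℕ, ∀ y : Fin n, ((S c).max' (hSne c) : ℕ) < y →
          max c (a : ℕ) < (α y : ℕ) := by
        intro c y hy
        by_contra h'
        push_neg at h'
        have : y ∈ S c := by
          simp only [hS, Finset.mem_filter, Finset.mem_univ, true_and]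
          exact h'
        have := (S c).le_max' y this
        rw [Fin.le_def] at this
        omega
      have keyA : ∀ c : ℕ, (a : ℕ) ≤ c → c < (b : ℕ) →
          (α ((S c).max' (hSne c)) : ℕ) = c := by
        intro c hac hcb
        set m : Fin n := (S c).max' (hSne c) with hm
        have h1 : (α m : ℕ) ≤ c := by
          have h1' := hmaxmem c
          rw [← hm] at h1'
          omega
        by_contra h'
        have h2 : (α m : ℕ) < c := by omega
        have hmn : (m : ℕ) < n - 1 := by
          by_contra h''
          push_neg at h''
          have hmeq : m = (⟨n - 1, hl⟩ : Fin n) := by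
            apply Fin.ext
            show (m : ℕ) = n - 1
            have := m.isLt
            omega
          rw [hmeq, ← hb] at h2
          omega
        have hstep := step hα (i := m) (j := ⟨(m : ℕ) + 1, by omega⟩) rfl
        have hmem : (⟨(m : ℕ) + 1, by omega⟩ : Fin n) ∈ S c := by
          simp only [hS, Finset.mem_filter, Finset.mem_univ, true_and]
          omega
        have hle := (S c).le_max' _ hmem
        rw [Fin.le_def] at hle
        have hle' : (m : ℕ) + 1 ≤ (m : ℕ) := hle
        omega
      have hSmono : ∀ c d : ℕ, max c (a : ℕ) ≤ max d (a : ℕ) → S c ⊆ S d := by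
        intro c d hcd y hy
        simp only [hS, Finset.mem_filter, Finset.mem_univ, true_and] at hy ⊢
        omega
      -- the regularity witness
      set β : Fin n → Fin n :=
        fun x => if (b : ℕ) ≤ (x : ℕ) then L else (S (x : ℕ)).max' (hSne _) with hβ
      have hβlt : ∀ x : Fin n, (x : ℕ) < b → β x = (S (x : ℕ)).max' (hSne _) := by
        intro x hx
        simp only [hβ]
        rw [if_neg (by omega)]
      have hβge : ∀ x : Fin n, (b : ℕ) ≤ x → β x = L := by
        intro x hx
        simp only [hβ]
        rw [if_pos hx]
      refine ⟨β, ?_, ?_⟩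
      · -- β is a weak endomorphism
        intro u v huv hne
        by_cases hbu : (b : ℕ) ≤ u
        · exfalso
          apply hne
          rw [hβge u hbu, hβge v (by omega)]
        · push_neg at hbu
          by_cases hbv : (b : ℕ) ≤ v
          · -- v sits exactly at b
            have hvb : (v : ℕ) = b := by omega
            have hau : (a : ℕ) ≤ u := by omega
            rw [hβge v hbv, hβlt u hbu]
            set m : Fin n := (S (u : ℕ)).max' (hSne _) with hm
            have hαm : (α m : ℕ) = u := keyA (u : ℕ) hau hbu
            have hml : (m : ℕ) < L := by
              by_contra h'
              push_neg at h'
              have := mono hα (i := L) (j := m) h'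
              rw [hLb] at this
              omega
            by_contra h'
            have hml2 : (m : ℕ) + 2 ≤ L := by omega
            set y' : Fin n := ⟨(L : ℕ) - 1, by have := L.isLt; omega⟩ with hy'
            have h1 : (u : ℕ) < α y' := by
              have := hgt (u : ℕ) y' (by show (m : ℕ) < (L : ℕ) - 1; omega)
              omega
            have h2 : (α y' : ℕ) ≤ b := (hbound y').2
            have h3 : α y' ≠ b := by
              intro he
              have h5 := hLmin y' he
              rw [Fin.le_def] at h5
              have h6 : (L : ℕ) ≤ (L : ℕ) - 1 := h5
              omega
            have h4 : (α y' : ℕ) ≠ b := fun he => h3 (Fin.ext he)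
            omega
          · push_neg at hbv
            by_cases hva : (v : ℕ) ≤ a
            · -- both below a : β constant there
              exfalso
              apply hne
              rw [hβlt u hbu, hβlt v hbv]
              have hsub1 : S (u : ℕ) ⊆ S (v : ℕ) := hSmono _ _ (by omega)
              have hsub2 : S (v : ℕ) ⊆ S (u : ℕ) := hSmono _ _ (by omega)
              exact le_antisymm (Finset.max'_subset _ hsub1) (Finset.max'_subset _ hsub2)
            · -- interior step
              push_neg at hva
              have hau : (a : ℕ) ≤ u := by omega
              rw [hβlt u hbu, hβlt v hbv]
              set m : Fin n := (S (u : ℕ)).max' (hSne _) with hm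
              set m' : Fin n := (S (v : ℕ)).max' (hSne _) with hm'
              have hαm : (α m : ℕ) = u := keyA (u : ℕ) hau hbu
              have hαm' : (α m' : ℕ) = v := keyA (v : ℕ) (by omega) hbv
              have hmm : (m : ℕ) < m' := by
                by_contra h'
                push_neg at h'
                have := mono hα (i := m') (j := m) h'
                omega
              by_contra h'
              have hml2 : (m : ℕ) + 2 ≤ m' := by omega
              set y' : Fin n := ⟨(m' : ℕ) - 1, by have := m'.isLt; omega⟩ with hy'
              have h1 : (u : ℕ) < α y' := by
                have := hgt (u : ℕ) y' (by show (m : ℕ) < (m' : ℕ) - 1; omega)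
                omega
              have h2 : (α y' : ℕ) ≤ α m' := mono hα (by show (m' : ℕ) - 1 ≤ (m' : ℕ); omega)
              have h3 : α y' = α m' := Fin.ext (by omega)
              have hy'm : y' ≠ m' := by
                intro he
                have h5 : (m' : ℕ) - 1 = (m' : ℕ) := congrArg Fin.val he
                omega
              have hcard : 1 < Set.ncard {y | α y = α m'} := by
                rw [Set.one_lt_ncard_iff (Set.toFinite _)]
                exact ⟨y', m', h3, rfl, hy'm⟩
              rcases h (α m') ⟨m', rfl⟩ hcard with hc | hc
              · have := hleast _ hc
                have : (α m' : ℕ) = a := congrArg Fin.val this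
                omega
              · have := hgreat _ hc
                have : (α m' : ℕ) = b := congrArg Fin.val this
                omega
      · -- α β α = α
        intro x
        have hax := (hbound x).1
        have hxb := (hbound x).2
        by_cases hc : (b : ℕ) ≤ (α x : ℕ)
        · have : α x = b := Fin.ext (by omega)
          rw [this, hβge b le_rfl, hLb]
        · push_neg at hc
          rw [hβlt (α x) hc]
          exact Fin.ext (keyA _ hax hc)
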